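/- For the Lorentzian metric Lie algebra on pseudo-orthonormal basis u1,u2,u3,u4 (⟨u1,u2⟩=⟨u3,u3⟩=⟨u4,u4⟩=1) with brackets [u1,u4]=γ1 u1 + u2, [u2,u4]=−γ1 u2, [u3,u4]=η2 u3 where γ1 = −(1/4)(1+√5)η2 and η2 ≠ 0, the Ricci operator has characteristic polynomial t²(t+η2²)², i.e., eigenvalues 0 (multiplicity 2) and −η2² (multiplicity 2). -/

import Mathlib

noncomputable section

open Finset Polynomial

abbrev V : Type := Fin 4 → ℝ

def e (i : Fin 4) : V := Pi.single i 1

/-- bilinear bracket determined by structure constants `c`. -/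
def br (c : Fin 4 → Fin 4 → V) (x y : V) : V :=
  ∑ i : Fin 4, ∑ j : Fin 4, (x i * y j) • c i j

/-- bilinear form determined by the matrix `G`. -/
def gmet (G : Matrix (Fin 4) (Fin 4) ℝ) (x y : V) : ℝ :=
  ∑ i : Fin 4, ∑ j : Fin 4, x i * y j * G i j

/-- `D` satisfies the Koszul formula of the Levi-Civita connection. -/
def Koszul (G : Matrix (Fin 4) (Fin 4) ℝ) (c : Fin 4 → Fin 4 → V) (D : V → V → V) : Prop :=
  ∀ x y z : V, 2 * gmet G (D x y) z =
    gmet G (br c x y) z - gmet G (br c y z) x + gmet G (br c z x) y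

/-- curvature tensor `R(x,y)z`. -/
def Rcurv (c : Fin 4 → Fin 4 → V) (D : V → V → V) (x y z : V) : V :=
  D x (D y z) - D y (D x z) - D (br c x y) z

/-- Ricci tensor `ρ(x,y) = tr (z ↦ R(z,x)y)`. -/
def ricciT (c : Fin 4 → Fin 4 → V) (D : V → V → V) (x y : V) : ℝ :=
  ∑ i : Fin 4, Rcurv c D (e i) x y i

/-- scalar curvature: metric trace of the Ricci tensor (here `G` is its own inverse). -/
def scalCurv (G : Matrix (Fin 4) (Fin 4) ℝ) (c : Fin 4 → Fin 4 → V) (D : V → V → V) : ℝ :=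
  ∑ i : Fin 4, ∑ j : Fin 4, G i j * ricciT c D (e i) (e j)

/-- metric with ⟨u1,u2⟩=⟨u3,u3⟩=⟨u4,u4⟩=1. -/
def Gpp : Matrix (Fin 4) (Fin 4) ℝ := !![0,1,0,0; 1,0,0,0; 0,0,1,0; 0,0,0,1]

/-- metric with ⟨u1,u1⟩=⟨u2,u2⟩=⟨u3,u4⟩=1. -/
def Gdeg : Matrix (Fin 4) (Fin 4) ℝ := !![1,0,0,0; 0,1,0,0; 0,0,0,1; 0,0,1,0]

/-- orthonormal metric with e4 timelike. -/
def Gort : Matrix (Fin 4) (Fin 4) ℝ := !![1,0,0,0; 0,1,0,0; 0,0,1,0; 0,0,0,-1]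

def c12 (g1 h2 : ℝ) : Fin 4 → Fin 4 → V :=
  let b14 : V := ![g1, 1, 0, 0]
  let b24 : V := ![0, -g1, 0, 0]
  let b34 : V := ![0, 0, h2, 0]
  ![![0, 0, 0, b14],
    ![0, 0, 0, b24],
    ![0, 0, 0, b34],
    ![-b14, -b24, -b34, 0]]


lemma gmet_pp (x y : V) : gmet Gpp x y = x 0 * y 1 + x 1 * y 0 + x 2 * y 2 + x 3 * y 3 := by
  simp [gmet, Gpp, Fin.sum_univ_four, Matrix.vecHead, Matrix.vecTail]

lemma br_c12 (g1 h2 : ℝ) (x y : V) : br (c12 g1 h2) x y =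
    ![g1*(x 0*y 3 - x 3*y 0), (x 0*y 3 - x 3*y 0) - g1*(x 1*y 3 - x 3*y 1),
      h2*(x 2*y 3 - x 3*y 2), 0] := by
  funext k
  fin_cases k <;>
    simp [br, c12, Fin.sum_univ_four, Matrix.vecHead, Matrix.vecTail] <;> ring

lemma e0v : (e 0 : V) = ![1,0,0,0] := by funext k; fin_cases k <;> simp [e]
lemma e1v : (e 1 : V) = ![0,1,0,0] := by funext k; fin_cases k <;> simp [e]
lemma e2v : (e 2 : V) = ![0,0,1,0] := by funext k; fin_cases k <;> simp [e]
lemma e3v : (e 3 : V) = ![0,0,0,1] := by funext k; fin_cases k <;> simp [e]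

lemma Dval (g1 h2 : ℝ) (D : V → V → V) (hD : Koszul Gpp (c12 g1 h2) D) (x y : V) :
    D x y = ![-(g1*(x 3*y 0)), x 0*y 3 + g1*(x 3*y 1), h2*(x 2*y 3),
              -(x 0*y 0) - h2*(x 2*y 2)] := by
  have h0 := hD x y (e 0)
  have h1 := hD x y (e 1)
  have h2' := hD x y (e 2)
  have h3 := hD x y (e 3)
  simp only [gmet_pp, br_c12, e0v, e1v, e2v, e3v, Matrix.cons_val_zero, Matrix.cons_val_one,
    Matrix.head_cons, Matrix.cons_val_two, Matrix.tail_cons, Matrix.cons_val_three] at h0 h1 h2' h3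
  funext k
  fin_cases k <;>
    simp only [Fin.zero_eta, Fin.mk_one, show (⟨2, by norm_num⟩ : Fin 4) = 2 from rfl,
      show (⟨3, by norm_num⟩ : Fin 4) = 3 from rfl, Matrix.cons_val_zero, Matrix.cons_val_one,
      Matrix.head_cons, Matrix.cons_val_two, Matrix.tail_cons, Matrix.cons_val_three]
  · linear_combination h1 / 2
  · linear_combination h0 / 2
  · linear_combination h2' / 2
  · linear_combination h3 / 2

lemma ricci_val (g1 h2 : ℝ) (D : V → V → V) (hD : Koszul Gpp (c12 g1 h2) D) (i j : Fin 4) :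
    ricciT (c12 g1 h2) D (e i) (e j) =
      !![-h2 - 2*g1, 0, 0, 0; 0, 0, 0, 0; 0, 0, -h2^2, 0; 0, 0, 0, -h2^2] i j := by
  have hDv := Dval g1 h2 D hD
  fin_cases i <;> fin_cases j <;>
    · simp only [Fin.zero_eta, Fin.mk_one, show (⟨2, by norm_num⟩ : Fin 4) = 2 from rfl,
        show (⟨3, by norm_num⟩ : Fin 4) = 3 from rfl,
        ricciT, Rcurv, hDv, br_c12, e0v, e1v, e2v, e3v, Fin.sum_univ_four,
        Pi.sub_apply, Matrix.cons_val_zero, Matrix.cons_val_one, Matrix.head_cons,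
        Matrix.cons_val_two, Matrix.tail_cons, Matrix.cons_val_three, Matrix.cons_val',
        Matrix.empty_val', Matrix.cons_val_fin_one, Matrix.of_apply, Matrix.head_fin_const]
      ring

lemma det_fin_four' {R : Type*} [CommRing R] (M : Matrix (Fin 4) (Fin 4) R) :
    M.det = M 0 0 * M 1 1 * M 2 2 * M 3 3 - M 0 0 * M 1 1 * M 2 3 * M 3 2
      - M 0 0 * M 1 2 * M 2 1 * M 3 3 + M 0 0 * M 1 2 * M 2 3 * M 3 1
      + M 0 0 * M 1 3 * M 2 1 * M 3 2 - M 0 0 * M 1 3 * M 2 2 * M 3 1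
      - M 0 1 * M 1 0 * M 2 2 * M 3 3 + M 0 1 * M 1 0 * M 2 3 * M 3 2
      + M 0 1 * M 1 2 * M 2 0 * M 3 3 - M 0 1 * M 1 2 * M 2 3 * M 3 0
      - M 0 1 * M 1 3 * M 2 0 * M 3 2 + M 0 1 * M 1 3 * M 2 2 * M 3 0
      + M 0 2 * M 1 0 * M 2 1 * M 3 3 - M 0 2 * M 1 0 * M 2 3 * M 3 1
      - M 0 2 * M 1 1 * M 2 0 * M 3 3 + M 0 2 * M 1 1 * M 2 3 * M 3 0
      + M 0 2 * M 1 3 * M 2 0 * M 3 1 - M 0 2 * M 1 3 * M 2 1 * M 3 0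
      - M 0 3 * M 1 0 * M 2 1 * M 3 2 + M 0 3 * M 1 0 * M 2 2 * M 3 1
      + M 0 3 * M 1 1 * M 2 0 * M 3 2 - M 0 3 * M 1 1 * M 2 2 * M 3 0
      - M 0 3 * M 1 2 * M 2 0 * M 3 1 + M 0 3 * M 1 2 * M 2 1 * M 3 0 := by
  rw [Matrix.det_succ_row_zero]
  simp [Fin.sum_univ_succ, Matrix.det_fin_three, Matrix.submatrix_apply,
    show Fin.succAbove (1 : Fin 4) (2 : Fin 3) = 3 by decide,
    show Fin.succAbove (2 : Fin 4) (2 : Fin 3) = 3 by decide,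
    show Fin.succAbove (3 : Fin 4) (2 : Fin 3) = 2 by decide]
  ring

/-- the Ricci operator has characteristic polynomial t²(t+η2²)². -/
theorem stmt12 (h2 : ℝ) (hh2 : h2 ≠ 0)
    (g1 : ℝ) (hg1 : g1 = -(1/4) * (1 + Real.sqrt 5) * h2)
    (D : V → V → V) (hD : Koszul Gpp (c12 g1 h2) D) :
    (Gpp * Matrix.of fun i j => ricciT (c12 g1 h2) D (e i) (e j)).charpoly =
      X^2 * (X + C (h2^2))^2 := by
  have hρ : (Matrix.of fun i j => ricciT (c12 g1 h2) D (e i) (e j)) =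
      !![-h2 - 2*g1, 0,0,0; 0,0,0,0; 0,0,-h2^2,0; 0,0,0,-h2^2] := by
    ext i j; exact ricci_val g1 h2 D hD i j
  have hM : Gpp * (!![-h2 - 2*g1, 0,0,0; 0,0,0,0; 0,0,-h2^2,0; 0,0,0,-h2^2] :
      Matrix (Fin 4) (Fin 4) ℝ) =
      !![0,0,0,0; -h2 - 2*g1,0,0,0; 0,0,-h2^2,0; 0,0,0,-h2^2] := by
    ext i j
    fin_cases i <;> fin_cases j <;>
      simp [Gpp, Matrix.mul_apply, Fin.sum_univ_four, Matrix.vecHead, Matrix.vecTail]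
  rw [hρ, hM]
  unfold Matrix.charpoly
  rw [det_fin_four']
  simp [Matrix.charmatrix_apply, Matrix.diagonal_apply, Matrix.vecHead, Matrix.vecTail,
    Matrix.one_apply]
  ring
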